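/- Let C ⊆ ℝ^d be a nonempty closed polyhedral cone. Then the sets X_F, as F ranges over the faces of C, are pairwise disjoint and their union is all of ℝ^d. Consequently Σ_{k=0}^{d} ν_k(C) = 1. -/

import Mathlib

/-!
Formalization of statements from "Projection Volumes of Hyperplane Arrangements"
by Klivans and Swartz.
-/

open scoped RealInnerProductSpace Pointwise
open MeasureTheory Metric Set

noncomputable section

attribute [local instance] Classical.decEq Classical.propDecidable

/-- Shorthand for the ambient Euclidean space `ℝ^d`. -/
abbrev Euc (d : ℕ) := EuclideanSpace ℝ (Fin d)

variable {E : Type*} [NormedAddCommGroup E] [InnerProductSpace ℝ E] [FiniteDimensional ℝ E]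
  [MeasurableSpace E] [BorelSpace E]

/-- A (linear) hyperplane: the orthogonal complement of a nonzero vector,
i.e. a codimension-one linear subspace. -/
def IsLinearHyperplane (H : Submodule ℝ E) : Prop :=
  ∃ η : E, η ≠ 0 ∧ H = (Submodule.span ℝ {η})ᗮ

/-- The intersection poset `L(𝒜)`: all intersections of subsets of `𝒜`
(the empty intersection being the whole space `⊤`), as a finset of subspaces.
It is ordered by *reverse* inclusion: `x ⊑ y` in `L(𝒜)` iff `y ≤ x` as submodules;
the minimal element `ℝ^d` is `⊤`. -/
def interPoset (A : Finset (Submodule ℝ E)) : Finset (Submodule ℝ E) :=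
  A.powerset.image fun S => S.inf id

/-- The complement of the union of the hyperplanes of `𝒜`. -/
def hypComplement (A : Finset (Submodule ℝ E)) : Set E :=
  {z | ∀ H ∈ A, z ∉ H}

/-- A region of `𝒜`: a connected component of the complement of the hyperplanes. -/
def IsRegion (A : Finset (Submodule ℝ E)) (C : Set E) : Prop :=
  ∃ z ∈ hypComplement A, C = connectedComponentIn (hypComplement A) z

/-- `p` is the nearest point of `C` to `z` (i.e. `p = π_C(z)`, the orthogonal
projection of `z` onto `C`; it is unique when `C` is nonempty, closed and convex). -/
def IsNearestPt (C : Set E) (z p : E) : Prop :=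
  p ∈ C ∧ ∀ q ∈ C, dist z p ≤ dist z q

/-- A face of a convex set `C`: a nonempty exposed face (`C` itself included). -/
def IsFaceOf (C F : Set E) : Prop :=
  F.Nonempty ∧ IsExposed ℝ C F

/-- The dimension of a set: the dimension of the direction space of its affine span. -/
def sdim (F : Set E) : ℕ := Module.finrank ℝ (vectorSpan ℝ F)

/-- `X_F`: the set of points `z` whose orthogonal projection onto `C` lies in the
relative interior (= intrinsic interior) of the face `F`. -/
def projRegion (C F : Set E) : Set E :=
  {z | ∃ p, IsNearestPt C z p ∧ p ∈ intrinsicInterior ℝ F}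

/-- `ν_C(F)`: the fraction of the volume of the unit ball occupied by `X_F`. -/
def nuF (C F : Set E) : ℝ :=
  (volume (projRegion C F ∩ closedBall (0 : E) 1)).toReal /
    (volume (closedBall (0 : E) 1)).toReal

/-- `ν_k(C)`: the sum of `ν_C(F)` over all `k`-dimensional faces `F` of `C`. -/
def nuK (C : Set E) (k : ℕ) : ℝ :=
  ∑ᶠ F ∈ {F | IsFaceOf C F ∧ sdim F = k}, nuF C F


/-- A closed polyhedral cone: a finite intersection of closed linear halfspaces. -/
def IsPolyhedralCone (C : Set E) : Prop :=
  ∃ (m : ℕ) (η : Fin m → E), C = {z | ∀ i, ⟪η i, z⟫ ≤ 0}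
set_option linter.unusedSectionVars false
set_option linter.unusedVariables false
section Proj

variable {E : Type*} [NormedAddCommGroup E] [InnerProductSpace ℝ E] [FiniteDimensional ℝ E]

/-- nearest point iff norm equals infimum -/
theorem isNearestPt_iff_norm_eq_iInf {C : Set E} (hcv : Convex ℝ C) {z p : E} (hp : p ∈ C) :
    IsNearestPt C z p ↔ ‖z - p‖ = ⨅ w : C, ‖z - w‖ := by
  haveI : Nonempty C := ⟨⟨p, hp⟩⟩
  have bdd : BddBelow (Set.range fun w : C => ‖z - w‖) :=
    ⟨0, by rintro b ⟨w, rfl⟩; exact norm_nonneg _⟩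
  constructor
  · rintro ⟨-, h⟩
    refine le_antisymm ?_ (ciInf_le bdd ⟨p, hp⟩)
    refine le_ciInf fun w => ?_
    simpa [dist_eq_norm] using h w w.2
  · intro h
    refine ⟨hp, fun q hq => ?_⟩
    rw [dist_eq_norm, dist_eq_norm, h]
    exact ciInf_le bdd ⟨q, hq⟩

theorem isNearestPt_iff_inner {C : Set E} (hcv : Convex ℝ C) {z p : E} (hp : p ∈ C) :
    IsNearestPt C z p ↔ ∀ w ∈ C, ⟪z - p, w - p⟫ ≤ 0 := by
  rw [isNearestPt_iff_norm_eq_iInf hcv hp, norm_eq_iInf_iff_real_inner_le_zero hcv hp]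

theorem IsNearestPt.unique {C : Set E} (hcv : Convex ℝ C) {z p q : E}
    (hp : IsNearestPt C z p) (hq : IsNearestPt C z q) : p = q := by
  have h1 := (isNearestPt_iff_inner hcv hp.1).1 hp q hq.1
  have h2 := (isNearestPt_iff_inner hcv hq.1).1 hq p hp.1
  have e : ⟪q - p, q - p⟫ = ⟪z - p, q - p⟫ + ⟪z - q, p - q⟫ := by
    simp only [inner_sub_left, inner_sub_right]
    ring
  have h3 : ⟪q - p, q - p⟫ ≤ 0 := by rw [e]; linarith
  have h4 : q - p = (0 : E) := inner_self_eq_zero.1 (le_antisymm h3 real_inner_self_nonneg)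
  exact (sub_eq_zero.1 h4).symm

theorem exists_isNearestPt {C : Set E} (hne : C.Nonempty) (hcl : IsClosed C)
    (hcv : Convex ℝ C) (z : E) : ∃ p, IsNearestPt C z p := by
  obtain ⟨p, hp, hnorm⟩ := exists_norm_eq_iInf_of_complete_convex hne hcl.isComplete hcv z
  exact ⟨p, (isNearestPt_iff_norm_eq_iInf hcv hp).2 hnorm⟩

/-- the metric projection onto a nonempty closed convex set -/
def projMap {C : Set E} (hne : C.Nonempty) (hcl : IsClosed C) (hcv : Convex ℝ C) (z : E) : E :=
  Classical.choose (exists_isNearestPt hne hcl hcv z)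

theorem projMap_isNearestPt {C : Set E} (hne : C.Nonempty) (hcl : IsClosed C) (hcv : Convex ℝ C)
    (z : E) : IsNearestPt C z (projMap hne hcl hcv z) :=
  Classical.choose_spec (exists_isNearestPt hne hcl hcv z)

theorem projMap_lipschitz {C : Set E} (hne : C.Nonempty) (hcl : IsClosed C) (hcv : Convex ℝ C) :
    LipschitzWith 1 (projMap hne hcl hcv) := by
  set f := projMap hne hcl hcv with hf
  apply LipschitzWith.of_dist_le_mul
  intro z w
  have hz := projMap_isNearestPt hne hcl hcv z
  have hw := projMap_isNearestPt hne hcl hcv w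
  have h1 : ⟪z - f z, f w - f z⟫ ≤ 0 := (isNearestPt_iff_inner hcv hz.1).1 hz _ hw.1
  have h2 : ⟪w - f w, f z - f w⟫ ≤ 0 := (isNearestPt_iff_inner hcv hw.1).1 hw _ hz.1
  have key : ‖f z - f w‖ ^ 2 ≤ ⟪z - w, f z - f w⟫ := by
    have e : ⟪z - f z, f w - f z⟫ + ⟪w - f w, f z - f w⟫
        = ⟪z - w, f w - f z⟫ + ⟪f z - f w, f z - f w⟫ := by
      simp only [inner_sub_left, inner_sub_right]; ring
    have e2 : ⟪z - w, f w - f z⟫ = -⟪z - w, f z - f w⟫ := by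
      simp only [inner_sub_left, inner_sub_right]; ring
    have := real_inner_self_eq_norm_sq (f z - f w)
    nlinarith [e ▸ (add_nonpos h1 h2)]
  have cs := real_inner_le_norm (z - w) (f z - f w)
  rcases eq_or_lt_of_le (norm_nonneg (f z - f w)) with h0 | h0
  · rw [dist_eq_norm, dist_eq_norm, ← h0]
    positivity
  · rw [dist_eq_norm, dist_eq_norm]
    push_cast
    nlinarith
theorem measurableSet_intrinsicInterior {V : Type*} [NormedAddCommGroup V] [NormedSpace ℝ V]
    [FiniteDimensional ℝ V] [MeasurableSpace V] [BorelSpace V] (s : Set V) :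
    MeasurableSet (intrinsicInterior ℝ s) := by
  obtain ⟨U, hU, hUeq⟩ := isOpen_induced_iff.1
    (isOpen_interior (s := ((↑) ⁻¹' s : Set (affineSpan ℝ s))))
  have himg : intrinsicInterior ℝ s = U ∩ (affineSpan ℝ s : Set V) := by
    rw [intrinsicInterior, ← hUeq]
    ext x
    simp only [Set.mem_image, Set.mem_preimage, Set.mem_inter_iff, SetLike.mem_coe]
    constructor
    · rintro ⟨y, hy, rfl⟩; exact ⟨hy, y.2⟩
    · rintro ⟨hx, hx2⟩; exact ⟨⟨x, hx2⟩, hx, rfl⟩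
  rw [himg]
  exact hU.measurableSet.inter (affineSpan ℝ s).closed_of_finiteDimensional.measurableSet

theorem projRegion_eq_preimage {C : Set E} (hne : C.Nonempty) (hcl : IsClosed C)
    (hcv : Convex ℝ C) (F : Set E) :
    projRegion C F = projMap hne hcl hcv ⁻¹' intrinsicInterior ℝ F := by
  ext z
  constructor
  · rintro ⟨p, hp, hpF⟩
    have h := hp.unique hcv (projMap_isNearestPt hne hcl hcv z)
    simpa [Set.mem_preimage, ← h] using hpF
  · intro h
    exact ⟨_, projMap_isNearestPt hne hcl hcv z, h⟩

theorem measurableSet_projRegion [MeasurableSpace E] [BorelSpace E] {C : Set E} (hne : C.Nonempty)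
    (hcl : IsClosed C) (hcv : Convex ℝ C) (F : Set E) : MeasurableSet (projRegion C F) := by
  rw [projRegion_eq_preimage hne hcl hcv F]
  exact ((projMap_lipschitz hne hcl hcv).continuous.measurable)
    (measurableSet_intrinsicInterior F)

end Proj
section Faces

variable {E : Type*} [NormedAddCommGroup E] [InnerProductSpace ℝ E] [FiniteDimensional ℝ E]
variable {m : ℕ}

/-- the polyhedral cone cut out by the normals `η`. -/
def polyC (η : Fin m → E) : Set E := {z | ∀ i, ⟪η i, z⟫ ≤ 0}

theorem polyC_convex (η : Fin m → E) : Convex ℝ (polyC η) := by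
  have : polyC η = ⋂ i, {z | ⟪η i, z⟫ ≤ 0} := by ext z; simp [polyC]
  rw [this]
  exact convex_iInter fun i => convex_halfSpace_le
    ⟨fun a b => inner_add_right _ _ _, fun c a => real_inner_smul_right _ _ _⟩ 0

theorem polyC_closed (η : Fin m → E) : IsClosed (polyC η) := by
  have : polyC η = ⋂ i, {z | ⟪η i, z⟫ ≤ 0} := by ext z; simp [polyC]
  rw [this]
  exact isClosed_iInter fun i =>
    isClosed_le (continuous_const.inner continuous_id) continuous_const

/-- the face of `polyC η` containing `p` in its relative interior. -/
def faceAt (η : Fin m → E) (p : E) : Set E :=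
  {x ∈ polyC η | ∀ i, ⟪η i, p⟫ = 0 → ⟪η i, x⟫ = 0}

theorem mem_faceAt_self {η : Fin m → E} {p : E} (hp : p ∈ polyC η) : p ∈ faceAt η p :=
  ⟨hp, fun _ hi => hi⟩

/-- membership in the intrinsic interior via metric balls inside the affine span -/
theorem mem_intrinsicInterior_of_ball {s : Set E} {p : E} (hp : p ∈ s) {ε : ℝ} (hε : 0 < ε)
    (h : ∀ x, x ∈ affineSpan ℝ s → dist x p < ε → x ∈ s) : p ∈ intrinsicInterior ℝ s := by
  refine mem_intrinsicInterior.2 ⟨⟨p, subset_affineSpan ℝ s hp⟩, ?_, rfl⟩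
  rw [mem_interior_iff_mem_nhds, Metric.mem_nhds_iff]
  refine ⟨ε, hε, fun y hy => ?_⟩
  rw [Metric.mem_ball, Subtype.dist_eq] at hy
  exact h y.1 y.2 hy

theorem exists_ball_of_mem_intrinsicInterior {s : Set E} {p : E}
    (hp : p ∈ intrinsicInterior ℝ s) :
    ∃ ε > 0, ∀ x, x ∈ affineSpan ℝ s → dist x p < ε → x ∈ s := by
  obtain ⟨y, hy, rfl⟩ := mem_intrinsicInterior.1 hp
  rw [mem_interior_iff_mem_nhds, Metric.mem_nhds_iff] at hy
  obtain ⟨ε, hε, hball⟩ := hy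
  refine ⟨ε, hε, fun x hx hdist => ?_⟩
  have : (⟨x, hx⟩ : affineSpan ℝ s) ∈ Metric.ball y ε := by
    rw [Metric.mem_ball, Subtype.dist_eq]; exact hdist
  exact hball this

/-- can move slightly past `p` within `F` away from `x` -/
theorem exists_pushPast {F : Set E} {p x : E} (hp : p ∈ intrinsicInterior ℝ F) (hx : x ∈ F) :
    ∃ t : ℝ, 0 < t ∧ p + t • (p - x) ∈ F := by
  have hpF : p ∈ F := intrinsicInterior_subset hp
  obtain ⟨ε, hε, hball⟩ := exists_ball_of_mem_intrinsicInterior hp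
  rcases eq_or_ne p x with rfl | hne
  · exact ⟨1, one_pos, by simpa using hpF⟩
  · have hnorm : 0 < ‖p - x‖ := by
      rw [norm_pos_iff, sub_ne_zero]; exact hne
    set t := ε / (2 * ‖p - x‖) with ht
    have htpos : 0 < t := by positivity
    refine ⟨t, htpos, ?_⟩
    have hmem : p + t • (p - x) ∈ affineSpan ℝ F := by
      have := (affineSpan ℝ F).smul_vsub_vadd_mem t (subset_affineSpan ℝ F hpF)
        (subset_affineSpan ℝ F hx) (subset_affineSpan ℝ F hpF)
      simpa [vsub_eq_sub, vadd_eq_add, add_comm] using this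
    refine hball _ hmem ?_
    have : dist (p + t • (p - x)) p = t * ‖p - x‖ := by
      rw [dist_eq_norm]
      simp [norm_smul, abs_of_pos htpos]
    rw [this, ht]
    rw [div_mul_eq_mul_div, mul_comm]
    rw [div_lt_iff₀ (by positivity)]
    nlinarith

theorem faceAt_isExposed {η : Fin m → E} {p : E} (hp : p ∈ polyC η) :
    IsExposed ℝ (polyC η) (faceAt η p) := by
  intro _
  classical
  set I : Finset (Fin m) := Finset.univ.filter (fun i => ⟪η i, p⟫ = 0) with hI
  refine ⟨innerSL ℝ (∑ i ∈ I, η i), ?_⟩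
  have hval : ∀ x : E, (innerSL ℝ (∑ i ∈ I, η i)) x = ∑ i ∈ I, ⟪η i, x⟫ := fun x => by
    simp [sum_inner]
  ext x
  constructor
  · rintro ⟨hxC, hxeq⟩
    refine ⟨hxC, fun y hy => ?_⟩
    have hx0 : (innerSL ℝ (∑ i ∈ I, η i)) x = 0 := by
      rw [hval]
      exact Finset.sum_eq_zero fun i hi => hxeq i (by simpa [hI] using hi)
    have hy0 : (innerSL ℝ (∑ i ∈ I, η i)) y ≤ 0 := by
      rw [hval]
      exact Finset.sum_nonpos fun i _ => hy i
    rw [hx0]; exact hy0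
  · rintro ⟨hxC, hmax⟩
    refine ⟨hxC, fun i hi => ?_⟩
    have hp0 : (innerSL ℝ (∑ i ∈ I, η i)) p = 0 := by
      rw [hval]
      exact Finset.sum_eq_zero fun j hj => by simpa [hI] using hj
    have hx0 : (innerSL ℝ (∑ i ∈ I, η i)) x = 0 := by
      have h1 := hmax p hp
      have h2 : (innerSL ℝ (∑ i ∈ I, η i)) x ≤ 0 := by
        rw [hval]; exact Finset.sum_nonpos fun j _ => hxC j
      rw [hp0] at h1
      linarith
    rw [hval] at hx0
    have := (Finset.sum_eq_zero_iff_of_nonpos (fun j _ => hxC j)).1 hx0 i (by simp [hI, hi])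
    exact this

theorem mem_intrinsicInterior_faceAt {η : Fin m → E} {p : E} (hp : p ∈ polyC η) :
    p ∈ intrinsicInterior ℝ (faceAt η p) := by
  -- the linear subspace containing the face
  set V : Submodule ℝ E :=
    { carrier := {x | ∀ i, ⟪η i, p⟫ = 0 → ⟪η i, x⟫ = 0}
      add_mem' := fun ha hb i hi => by
        rw [inner_add_right, ha i hi, hb i hi, add_zero]
      zero_mem' := fun i hi => inner_zero_right _
      smul_mem' := fun c a ha i hi => by
        rw [real_inner_smul_right, ha i hi, mul_zero] } with hV
  have hspan : (affineSpan ℝ (faceAt η p) : Set E) ⊆ (V.toAffineSubspace : Set E) :=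
    affineSpan_le.2 fun x hx => hx.2
  -- the open set of strict inequalities
  set U : Set E := ⋂ i, {x | ⟪η i, p⟫ = 0 ∨ ⟪η i, x⟫ < 0} with hU
  have hUopen : IsOpen U := by
    refine isOpen_iInter_of_finite fun i => ?_
    by_cases h : ⟪η i, p⟫ = 0
    · have : {x : E | ⟪η i, p⟫ = 0 ∨ ⟪η i, x⟫ < 0} = Set.univ := by
        ext x; simp [h]
      rw [this]; exact isOpen_univ
    · have : {x : E | ⟪η i, p⟫ = 0 ∨ ⟪η i, x⟫ < 0} = {x | ⟪η i, x⟫ < 0} := by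
        ext x; simp [h]
      rw [this]
      exact isOpen_lt (continuous_const.inner continuous_id) continuous_const
  have hpU : p ∈ U := by
    refine Set.mem_iInter.2 fun i => ?_
    rcases lt_or_eq_of_le (hp i) with h | h
    · exact Or.inr h
    · exact Or.inl h
  obtain ⟨ε, hε, hball⟩ := Metric.isOpen_iff.1 hUopen p hpU
  refine mem_intrinsicInterior_of_ball (mem_faceAt_self hp) hε fun x hx hdist => ?_
  have hxV : x ∈ V := hspan hx
  have hxU : x ∈ U := hball (by rwa [Metric.mem_ball])
  have hxC : x ∈ polyC η := by
    intro i
    rcases Set.mem_iInter.1 hxU i with h | h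
    · exact le_of_eq (hxV i h)
    · exact h.le
  exact ⟨hxC, fun i hi => hxV i hi⟩

end Faces
section Faces2

variable {E : Type*} [NormedAddCommGroup E] [InnerProductSpace ℝ E] [FiniteDimensional ℝ E]
variable {m : ℕ}

theorem inner_pushPast (η : Fin m → E) (i : Fin m) (p x : E) (t : ℝ) :
    ⟪η i, p + t • (p - x)⟫ = (1 + t) * ⟪η i, p⟫ - t * ⟪η i, x⟫ := by
  simp [inner_add_right, inner_sub_right, real_inner_smul_right]; ring

theorem face_eq_faceAt {η : Fin m → E} {F : Set E} {p : E}
    (hF : IsFaceOf (polyC η) F) (hp : p ∈ intrinsicInterior ℝ F) : F = faceAt η p := by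
  obtain ⟨hne, hexp⟩ := hF
  have hpF : p ∈ F := intrinsicInterior_subset hp
  have hpC : p ∈ polyC η := hexp.subset hpF
  apply Set.Subset.antisymm
  · intro x hx
    obtain ⟨t, ht, hyF⟩ := exists_pushPast hp hx
    have hyC : p + t • (p - x) ∈ polyC η := hexp.subset hyF
    refine ⟨hexp.subset hx, fun i hi => ?_⟩
    have h1 := hyC i
    rw [inner_pushPast, hi] at h1
    have h2 := hexp.subset hx i
    nlinarith
  · intro x hx
    -- find a small positive t pushing past p away from x inside the cone
    have hev : ∀ᶠ t : ℝ in nhds 0, ∀ i, ⟪η i, p⟫ ≠ 0 →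
        (1 + t) * ⟪η i, p⟫ - t * ⟪η i, x⟫ < 0 := by
      rw [Filter.eventually_all]
      intro i
      by_cases hi : ⟪η i, p⟫ = 0
      · filter_upwards with t h; exact absurd hi h
      · have hlt : ⟪η i, p⟫ < 0 := lt_of_le_of_ne (hpC i) hi
        have hcont : Continuous fun t : ℝ => (1 + t) * ⟪η i, p⟫ - t * ⟪η i, x⟫ := by
          fun_prop
        have h0 : (fun t : ℝ => (1 + t) * ⟪η i, p⟫ - t * ⟪η i, x⟫) 0 < 0 := by
          simpa using hlt
        have := (isOpen_lt hcont continuous_const).mem_nhds h0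
        filter_upwards [this] with t h _; exact h
    have := ((hev.filter_mono (nhdsWithin_le_nhds (s := Set.Ioi (0:ℝ)))).and
      self_mem_nhdsWithin).exists
    obtain ⟨t, hts, ht0 : 0 < t⟩ := this
    have hyC : p + t • (p - x) ∈ polyC η := by
      intro i
      rw [inner_pushPast]
      by_cases hi : ⟪η i, p⟫ = 0
      · rw [hi, hx.2 i hi]; ring_nf; exact le_refl 0
      · exact (hts i hi).le
    obtain ⟨l, hl⟩ := hexp hne
    have hpmem : p ∈ {x ∈ polyC η | ∀ y ∈ polyC η, l y ≤ l x} := hl ▸ hpF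
    have hylep : l (p + t • (p - x)) ≤ l p := hpmem.2 _ hyC
    have hly : l (p + t • (p - x)) = l p + t * (l p - l x) := by
      rw [map_add, ContinuousLinearMap.map_smul, map_sub, smul_eq_mul]
    have hpx : l p ≤ l x := by
      rw [hly] at hylep; nlinarith
    rw [hl]
    exact ⟨hx.1, fun y' hy' => le_trans (hpmem.2 y' hy') hpx⟩

theorem isFaceOf_faceAt {η : Fin m → E} {p : E} (hp : p ∈ polyC η) :
    IsFaceOf (polyC η) (faceAt η p) :=
  ⟨⟨p, mem_faceAt_self hp⟩, faceAt_isExposed hp⟩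

theorem faces_finite (η : Fin m → E) : {F : Set E | IsFaceOf (polyC η) F}.Finite := by
  apply Set.Finite.subset (Set.finite_range
    (fun s : Set (Fin m) => {x ∈ polyC η | ∀ i ∈ s, ⟪η i, x⟫ = 0}))
  intro F hF
  have hconv : Convex ℝ F := hF.2.convex (polyC_convex η)
  obtain ⟨q, hq⟩ := (intrinsicInterior_nonempty hconv).2 hF.1
  refine ⟨{i | ⟪η i, q⟫ = 0}, ?_⟩
  have := face_eq_faceAt hF hq
  rw [this]
  rfl

end Faces2

/-- For a nonempty closed polyhedral cone `C ⊆ ℝ^d`, the sets `X_F`,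
as `F` ranges over the faces of `C`, are pairwise disjoint with union `ℝ^d`;
consequently `∑_{k=0}^{d} ν_k(C) = 1`. -/
theorem projRegions_partition {d : ℕ} (C : Set (Euc d))
    (hne : C.Nonempty) (hC : IsPolyhedralCone C) :
    (∀ F G : Set (Euc d), IsFaceOf C F → IsFaceOf C G → F ≠ G →
      projRegion C F ∩ projRegion C G = ∅)
    ∧ (⋃ F ∈ {F : Set (Euc d) | IsFaceOf C F}, projRegion C F) = Set.univ
    ∧ ∑ k ∈ Finset.range (d + 1), nuK C k = 1 := by
  obtain ⟨m, η, hCeq⟩ := hC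
  have hC' : C = polyC η := hCeq
  subst hC'
  have hcl := polyC_closed η
  have hcv := polyC_convex η
  -- Part 1: disjointness
  have disj : ∀ F G : Set (Euc d), IsFaceOf (polyC η) F → IsFaceOf (polyC η) G → F ≠ G →
      projRegion (polyC η) F ∩ projRegion (polyC η) G = ∅ := by
    intro F G hF hG hFG
    rw [Set.eq_empty_iff_forall_notMem]
    rintro z ⟨⟨p, hp, hpF⟩, ⟨q, hq, hqG⟩⟩
    have hpq : p = q := hp.unique hcv hq
    apply hFG
    rw [face_eq_faceAt hF hpF, face_eq_faceAt hG hqG, hpq]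
  -- Part 2: union
  have union : (⋃ F ∈ {F : Set (Euc d) | IsFaceOf (polyC η) F}, projRegion (polyC η) F)
      = Set.univ := by
    rw [Set.eq_univ_iff_forall]
    intro z
    obtain ⟨p, hp⟩ := exists_isNearestPt hne hcl hcv z
    exact Set.mem_biUnion (isFaceOf_faceAt hp.1) ⟨p, hp, mem_intrinsicInterior_faceAt hp.1⟩
  refine ⟨disj, union, ?_⟩
  -- Part 3: the volume computation
  classical
  set T : Finset (Set (Euc d)) := (faces_finite η).toFinset with hT
  have hmemT : ∀ F, F ∈ T ↔ IsFaceOf (polyC η) F := fun F => (faces_finite η).mem_toFinset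
  have hmeas : ∀ F : Set (Euc d), MeasurableSet (projRegion (polyC η) F) :=
    measurableSet_projRegion hne hcl hcv
  set B : Set (Euc d) := closedBall (0 : Euc d) 1 with hB
  have hBpos : volume B ≠ 0 := (measure_closedBall_pos volume (0 : Euc d) one_pos).ne'
  have hBfin : volume B ≠ ⊤ := measure_closedBall_lt_top.ne
  have hfinF : ∀ F : Set (Euc d), volume (projRegion (polyC η) F ∩ B) ≠ ⊤ :=
    fun F => ((measure_mono Set.inter_subset_right).trans_lt measure_closedBall_lt_top).ne
  -- pairwise disjointness of the pieces
  have hdisj' : (T : Set (Set (Euc d))).PairwiseDisjoint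
      (fun F => projRegion (polyC η) F ∩ B) := by
    intro F hF G hG hFG
    have h := disj F G ((hmemT F).1 (by simpa using hF)) ((hmemT G).1 (by simpa using hG)) hFG
    refine Set.disjoint_left.2 fun z hz1 hz2 => ?_
    have : z ∈ projRegion (polyC η) F ∩ projRegion (polyC η) G := ⟨hz1.1, hz2.1⟩
    rw [h] at this
    exact this
  -- total volume
  have hsum : ∑ F ∈ T, volume (projRegion (polyC η) F ∩ B) = volume B := by
    rw [← measure_biUnion_finset hdisj'
      (fun F _ => (hmeas F).inter measurableSet_closedBall)]
    congr 1
    rw [← Set.iUnion₂_inter]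
    have hTuniv : (⋃ F ∈ T, projRegion (polyC η) F) = Set.univ := by
      rw [← union]
      ext z
      simp only [Set.mem_iUnion, exists_prop]
      constructor
      · rintro ⟨F, hF, h⟩; exact ⟨F, (hmemT F).1 hF, h⟩
      · rintro ⟨F, hF, h⟩; exact ⟨F, (hmemT F).2 hF, h⟩
    rw [hTuniv, Set.univ_inter]
  -- rewrite each nuK as a finite sum
  have hnuK : ∀ k, nuK (polyC η) k =
      ∑ F ∈ T.filter (fun F => sdim F = k), nuF (polyC η) F := by
    intro k
    have hset : {F : Set (Euc d) | IsFaceOf (polyC η) F ∧ sdim F = k}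
        = ↑(T.filter (fun F => sdim F = k)) := by
      ext F
      simp only [Set.mem_setOf_eq, Finset.coe_filter, hmemT]
    rw [nuK, hset, finsum_mem_coe_finset]
  have hmaps : ∀ F ∈ T, sdim F ∈ Finset.range (d + 1) := by
    intro F _
    rw [Finset.mem_range, Nat.lt_succ_iff]
    calc sdim F ≤ Module.finrank ℝ (Euc d) := Submodule.finrank_le _
      _ = d := finrank_euclideanSpace_fin
  calc ∑ k ∈ Finset.range (d + 1), nuK (polyC η) k
      = ∑ k ∈ Finset.range (d + 1), ∑ F ∈ T.filter (fun F => sdim F = k),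
          nuF (polyC η) F := by
        exact Finset.sum_congr rfl fun k _ => hnuK k
    _ = ∑ F ∈ T, nuF (polyC η) F := Finset.sum_fiberwise_of_maps_to hmaps _
    _ = (∑ F ∈ T, volume (projRegion (polyC η) F ∩ B)).toReal / (volume B).toReal := by
        rw [ENNReal.toReal_sum (fun F _ => hfinF F), Finset.sum_div]
        exact Finset.sum_congr rfl fun F _ => rfl
    _ = 1 := by
        rw [hsum, div_self]
        exact ENNReal.toReal_ne_zero.2 ⟨hBpos, hBfin⟩
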